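/- Let β > 0, s ≥ 0, and let n ≥ 1 be an integer. Then for every t ≥ 0: ∫_0^t exp( −(n/2) ∫_0^r (β+S_u) du ) · (n/2)(β+S_r) · exp( −((n−1)/2) ∫_r^t (β+S_u) du ) dr = n p(t)^{n−1} (1 − p(t)). That is, the probability that the pure-death process which, in state k, jumps to k−1 at time-inhomogeneous rate k(β+S_t)/2, makes exactly one jump in [0,t] when started from n, equals the binomial probability Bin(n−1; n, p(t)) (the one-jump computation in the proof of Proposition 4.2). -/

import Mathlib

open MeasureTheory intervalIntegral

/-- The deterministic dual component `S_t = βs / ((β+s)e^{βt/2} - s)`. -/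
noncomputable def Sfun (β s t : ℝ) : ℝ :=
  β * s / ((β + s) * Real.exp (β * t / 2) - s)

/-- The no-jump probability parameter `p(t) = β / ((β+s)e^{βt/2} - s)`. -/
noncomputable def pfun (β s t : ℝ) : ℝ :=
  β / ((β + s) * Real.exp (β * t / 2) - s)

/-- The one-jump computation in the proof of Proposition 4.2: the probability that the pure-death
process which, in state `k`, jumps to `k-1` at rate `k(β+S_t)/2`, makes exactly one jump in
`[0,t]` when started from `n`, equals `Bin(n-1; n, p(t)) = n p(t)^{n-1} (1 - p(t))`. -/
theorem stmt8 (β : ℝ) (hβ : 0 < β) (s : ℝ) (hs : 0 ≤ s) (n : ℕ) (hn : 1 ≤ n)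
    (t : ℝ) (ht : 0 ≤ t) :
    (∫ r in (0 : ℝ)..t,
        Real.exp (-((n : ℝ) / 2) * ∫ u in (0 : ℝ)..r, (β + Sfun β s u)) *
          ((n : ℝ) / 2 * (β + Sfun β s r)) *
          Real.exp (-(((n : ℝ) - 1) / 2) * ∫ u in r..t, (β + Sfun β s u)))
      = (n : ℝ) * pfun β s t ^ (n - 1) * (1 - pfun β s t) := by
  obtain ⟨m, rfl⟩ : ∃ m, n = m + 1 := ⟨n - 1, (Nat.succ_pred_eq_of_pos hn).symm⟩
  set D : ℝ → ℝ := fun u => (β + s) * Real.exp (β * u / 2) - s with hDdef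
  have hD : ∀ u, 0 ≤ u → 0 < D u := by
    intro u hu
    have h1 : (1 : ℝ) ≤ Real.exp (β * u / 2) := Real.one_le_exp (by positivity)
    simp only [hDdef]
    nlinarith
  have hD0 : D 0 = β := by simp [hDdef]
  have hDderiv : ∀ x : ℝ, HasDerivAt D ((β + s) * (Real.exp (β * x / 2) * (β / 2))) x := by
    intro x
    have h1 : HasDerivAt (fun y : ℝ => β * y / 2) (β / 2) x := by
      simpa using ((hasDerivAt_id x).const_mul β).div_const 2
    exact ((h1.exp.const_mul (β + s)).sub_const s)
  have hlogderiv : ∀ x : ℝ, 0 ≤ x →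
      HasDerivAt (fun y => 2 * Real.log (D y)) (β + Sfun β s x) x := by
    intro x hx
    have hne : D x ≠ 0 := (hD x hx).ne'
    have := ((hDderiv x).log hne).const_mul 2
    refine this.congr_deriv ?_
    rw [show Sfun β s x = β * s / D x from rfl]
    field_simp
    simp only [hDdef]
    ring
  have hcont : ∀ a b : ℝ, 0 ≤ a → 0 ≤ b →
      ContinuousOn (fun u => β + Sfun β s u) (Set.uIcc a b) := by
    intro a b ha hb
    have hDc : Continuous D := by
      simp only [hDdef]
      exact (continuous_const.mul (Real.continuous_exp.comp
        ((continuous_const.mul continuous_id).div_const 2))).sub continuous_const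
    apply continuousOn_const.add
    apply continuousOn_const.div hDc.continuousOn
    intro u hu
    exact (hD u (le_trans (le_min ha hb) hu.1)).ne'
  have hint : ∀ a b : ℝ, 0 ≤ a → 0 ≤ b →
      (∫ u in a..b, (β + Sfun β s u)) = 2 * Real.log (D b) - 2 * Real.log (D a) := by
    intro a b ha hb
    apply intervalIntegral.integral_eq_sub_of_hasDerivAt
    · intro x hx
      exact hlogderiv x (le_trans (le_min ha hb) hx.1)
    · exact (hcont a b ha hb).intervalIntegrable
  have hDt : D t ≠ 0 := (hD t ht).ne'
  set h : ℝ → ℝ := fun r =>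
    ((m : ℝ) + 1) * pfun β s t ^ m * (β * ((β + s) * (Real.exp (β * r / 2) * (β / 2))) / (D r) ^ 2)
    with hhdef
  have huIcc : Set.uIcc (0:ℝ) t = Set.Icc 0 t := Set.uIcc_of_le ht
  have hcongr : ∀ r ∈ Set.uIcc (0:ℝ) t,
      Real.exp (-(((m+1 : ℕ) : ℝ) / 2) * ∫ u in (0 : ℝ)..r, (β + Sfun β s u)) *
          (((m+1 : ℕ) : ℝ) / 2 * (β + Sfun β s r)) *
          Real.exp (-((((m+1 : ℕ) : ℝ) - 1) / 2) * ∫ u in r..t, (β + Sfun β s u)) = h r := by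
    intro r hr
    rw [huIcc] at hr
    obtain ⟨hr0, hrt⟩ := hr
    have hDr : D r ≠ 0 := (hD r hr0).ne'
    rw [hint 0 r le_rfl hr0, hint r t hr0 ht]
    have e1 : Real.exp (-(((m+1 : ℕ) : ℝ) / 2) * (2 * Real.log (D r) - 2 * Real.log (D 0)))
        = (D 0 / D r) ^ (m + 1) := by
      rw [show -(((m+1 : ℕ) : ℝ) / 2) * (2 * Real.log (D r) - 2 * Real.log (D 0))
          = ((m + 1 : ℕ) : ℝ) * (Real.log (D 0) - Real.log (D r)) by push_cast; ring,
        Real.exp_nat_mul, Real.exp_sub, Real.exp_log (hD 0 le_rfl), Real.exp_log (hD r hr0)]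
    have e2 : Real.exp (-((((m+1 : ℕ) : ℝ) - 1) / 2) * (2 * Real.log (D t) - 2 * Real.log (D r)))
        = (D r / D t) ^ m := by
      rw [show -((((m+1 : ℕ) : ℝ) - 1) / 2) * (2 * Real.log (D t) - 2 * Real.log (D r))
          = ((m : ℕ) : ℝ) * (Real.log (D r) - Real.log (D t)) by push_cast; ring,
        Real.exp_nat_mul, Real.exp_sub, Real.exp_log (hD r hr0), Real.exp_log (hD t ht)]
    rw [e1, e2, hD0]
    simp only [hhdef]
    rw [show Sfun β s r = β * s / D r from rfl, show pfun β s t = β / D t from rfl]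
    have hE : (β + s) * (Real.exp (β * r / 2) * (β / 2)) = (D r + s) * (β / 2) := by
      simp only [hDdef]; ring
    rw [hE, div_pow, div_pow, div_pow]
    push_cast
    field_simp
    ring
  rw [intervalIntegral.integral_congr hcongr]
  have hFderiv : ∀ r ∈ Set.uIcc (0:ℝ) t,
      HasDerivAt (fun y => -(((m : ℝ) + 1) * pfun β s t ^ m) * pfun β s y) (h r) r := by
    intro r hr
    rw [huIcc] at hr
    have hDr : D r ≠ 0 := (hD r hr.1).ne'
    have h1 : HasDerivAt (fun y => pfun β s y)
        (β * (-((β + s) * (Real.exp (β * r / 2) * (β / 2))) / (D r) ^ 2)) r := by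
      have := ((hDderiv r).inv hDr).const_mul β
      simpa [pfun, hDdef, div_eq_mul_inv] using this
    have := h1.const_mul (-(((m : ℝ) + 1) * pfun β s t ^ m))
    refine this.congr_deriv ?_
    simp only [hhdef]
    ring
  have hhcont : ContinuousOn h (Set.uIcc (0:ℝ) t) := by
    have hDc : Continuous D := by
      simp only [hDdef]
      exact (continuous_const.mul (Real.continuous_exp.comp
        ((continuous_const.mul continuous_id).div_const 2))).sub continuous_const
    have h1 : Continuous fun r : ℝ => β * ((β + s) * (Real.exp (β * r / 2) * (β / 2))) :=
      continuous_const.mul (continuous_const.mul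
        ((Real.continuous_exp.comp ((continuous_const.mul continuous_id).div_const 2)).mul
          continuous_const))
    apply continuousOn_const.mul
    apply ContinuousOn.div h1.continuousOn (hDc.pow 2).continuousOn
    intro u hu
    rw [huIcc] at hu
    exact pow_ne_zero 2 ((hD u hu.1).ne')
  rw [intervalIntegral.integral_eq_sub_of_hasDerivAt hFderiv hhcont.intervalIntegrable]
  have hp0 : pfun β s 0 = 1 := by
    simp only [pfun]
    rw [mul_zero, zero_div, Real.exp_zero, mul_one]
    field_simp
    rw [add_sub_cancel_right, div_self hβ.ne']
  rw [hp0]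
  push_cast
  ring
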